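/- Let $K$ be a field of characteristic $0$, $v_0\ge 1$, and $f=1+x^{v_0}+\sum_{v>v_0}p_vx^v\in K[[x]]$. Set $g=f(f^{v_0}-1)/f'$ (well-defined since $f'$ has invertible leading structure after dividing by $v_0x^{v_0-1}$; equivalently $g$ is the unique series with $gf'=f(f^{v_0}-1)$). Let $Q_1$ be the unique series with $Q_1=x+O(x^2)$ and $gQ_1'=Q_1$. Then $v_0Q_1(x)^{v_0}=1-f(x)^{-v_0}$. -/

import Mathlib

open PowerSeries

private lemma lowcoeff {K : Type*} [Field K] {A : K⟦X⟧} {n k : ℕ}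
    (h : (X : K⟦X⟧) ^ n ∣ A) (hk : k < n) : coeff k A = 0 :=
  (PowerSeries.X_pow_dvd_iff.mp h) k hk

private lemma ode_unique {K : Type*} [Field K] [CharZero K] (v0 : ℕ) (g D : K⟦X⟧)
    (hg0 : coeff 0 g = 0) (hg1 : coeff 1 g = 1)
    (hD : g * PowerSeries.derivative K D = (v0 : K⟦X⟧) * D)
    (hlow : ∀ k, k ≤ v0 → coeff k D = 0) : D = 0 := by
  have key : ∀ n, coeff n D = 0 := by
    intro n
    induction n using Nat.strong_induction_on with
    | _ n ih =>
      rcases le_or_gt n v0 with h | h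
      · exact hlow n h
      · have hn1 : 1 ≤ n := by omega
        have hc := congrArg (coeff n) hD
        rw [coeff_mul, ← map_natCast (C (R := K)) v0, coeff_C_mul] at hc
        rw [Finset.sum_eq_single (1, n - 1)] at hc
        · rw [coeff_derivative, hg1, Nat.sub_add_cancel hn1, one_mul] at hc
          have hcast : (((1, n - 1).2 : ℕ) : K) + 1 = (n : K) := by
            show ((n - 1 : ℕ) : K) + 1 = (n : K)
            rw [Nat.cast_sub hn1]; ring
          rw [hcast] at hc
          have h2 : ((n : K) - (v0 : K)) * coeff n D = 0 := by linear_combination hc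
          rcases mul_eq_zero.mp h2 with h3 | h3
          · exact absurd (Nat.cast_injective (sub_eq_zero.mp h3)) (by omega)
          · exact h3
        · rintro ⟨i, j⟩ hmem hne
          rw [Finset.HasAntidiagonal.mem_antidiagonal] at hmem
          rcases Nat.eq_zero_or_pos i with h0 | h0
          · subst h0; rw [hg0, zero_mul]
          · have hi2 : 2 ≤ i := by
              rcases Nat.lt_or_ge i 2 with h1 | h1
              · exfalso
                have hi1 : i = 1 := by omega
                have hj1 : j = n - 1 := by omega
                exact hne (by rw [hi1, hj1])
              · exact h1
            have : j + 1 < n := by omega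
            rw [coeff_derivative, ih _ this, zero_mul, mul_zero]
        · intro habs
          exact absurd (Finset.HasAntidiagonal.mem_antidiagonal.mpr (by omega)) habs
  ext n
  rw [key n, map_zero]

/-- `v₀ Q₁^{v₀} = 1 - f^{-v₀}`. -/
theorem stmt9 {K : Type*} [Field K] [CharZero K] (v0 : ℕ) (hv0 : 1 ≤ v0) (f g Q : K⟦X⟧)
    (hf0 : coeff 0 f = 1) (hfv : coeff v0 f = 1)
    (hfm : ∀ v, 0 < v → v < v0 → coeff v f = 0)
    (hg : g * PowerSeries.derivative K f = f * (f ^ v0 - 1))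
    (hQ0 : constantCoeff Q = 0) (hQ1 : coeff 1 Q = 1)
    (hQeq : g * PowerSeries.derivative K Q = Q) :
    (v0 : K⟦X⟧) * Q ^ v0 = 1 - (f ^ v0)⁻¹ := by
  have hv0' : v0 ≠ 0 := by omega
  have hv0K : (v0 : K) ≠ 0 := Nat.cast_ne_zero.mpr hv0'
  have hCmul : ∀ (k : ℕ) (A : K⟦X⟧), coeff k ((v0 : K⟦X⟧) * A) = v0 * coeff k A := by
    intro k A; rw [← map_natCast (C (R := K)) v0, coeff_C_mul]
  set E : K⟦X⟧ := f - 1 with hE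
  -- X^v0 divides E
  have hXE : (X : K⟦X⟧) ^ v0 ∣ E := by
    rw [PowerSeries.X_pow_dvd_iff]
    intro m hm
    rcases Nat.eq_zero_or_pos m with h | h
    · subst h
      simp [hE, ← coeff_zero_eq_constantCoeff, hf0]
    · simp [hE, hfm m h hm, coeff_one, Nat.pos_iff_ne_zero.mp h]
  have hXdvdE : (X : K⟦X⟧) ∣ E := dvd_trans (dvd_pow_self X hv0') hXE
  have hXE1 : (X : K⟦X⟧) ^ (v0 + 1) ∣ E ^ 2 := by
    rw [pow_succ, sq]
    exact mul_dvd_mul hXE hXdvdE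
  have hEv : coeff v0 E = 1 := by
    simp [hE, coeff_one, hv0', hfv]
  -- f^n = 1 + n E mod E²
  have key : ∀ n : ℕ, E ^ 2 ∣ f ^ n - (1 + (n : K⟦X⟧) * E) := by
    intro n
    induction n with
    | zero => simp
    | succ n ih =>
      have hrw : f ^ (n + 1) - (1 + ((n + 1 : ℕ) : K⟦X⟧) * E)
          = f * (f ^ n - (1 + (n : K⟦X⟧) * E)) + (n : K⟦X⟧) * E ^ 2 := by
        push_cast
        rw [hE]; ring
      rw [hrw]
      exact dvd_add (ih.mul_left f) (Dvd.dvd.mul_left (dvd_refl _) _)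
  set u : K⟦X⟧ := f ^ v0 with hu
  obtain ⟨c, hc⟩ := key v0
  have hurep : u - 1 = (v0 : K⟦X⟧) * E + E ^ 2 * c := by
    rw [hu]; linear_combination hc
  have hu1 : (X : K⟦X⟧) ^ v0 ∣ u - 1 := by
    rw [hurep]
    exact dvd_add (hXE.mul_left _) (dvd_trans (dvd_trans (pow_dvd_pow X (by omega)) hXE1)
      (dvd_mul_right _ _))
  have hXdvdu1 : (X : K⟦X⟧) ∣ u - 1 := dvd_trans (dvd_pow_self X hv0') hu1
  have hcv0u : coeff v0 u = (v0 : K) := by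
    have h1 : coeff v0 (u - 1) = (v0 : K) := by
      rw [hurep, map_add, hCmul, hEv, mul_one,
        lowcoeff ((dvd_trans hXE1 (dvd_mul_right _ c))) (by omega), add_zero]
    have h2 : coeff v0 (1 : K⟦X⟧) = 0 := by simp [coeff_one, hv0']
    rw [map_sub, h2] at h1
    linear_combination h1
  have hcu0 : constantCoeff u = 1 := by
    rw [hu, map_pow, ← coeff_zero_eq_constantCoeff, hf0, one_pow]
  have huu : u * u⁻¹ = 1 := PowerSeries.mul_inv_cancel _ (by rw [hcu0]; exact one_ne_zero)
  have hinvlow : (X : K⟦X⟧) ^ v0 ∣ u⁻¹ - 1 := by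
    have hrw : u⁻¹ - 1 = (u - 1) * (-u⁻¹) := by linear_combination huu
    rw [hrw]
    exact hu1.mul_right _
  have hinv0 : coeff 0 u⁻¹ = 1 := by
    rw [coeff_zero_eq_constantCoeff, PowerSeries.constantCoeff_inv, hcu0, inv_one]
  have hXu2 : (X : K⟦X⟧) ^ (v0 + 1) ∣ (u - 1) ^ 2 := by
    rw [pow_succ, sq]
    exact mul_dvd_mul hu1 hXdvdu1
  have hinvv0 : coeff v0 u⁻¹ = -(v0 : K) := by
    have hrw : u⁻¹ = 1 - (u - 1) + (u - 1) ^ 2 * u⁻¹ := by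
      linear_combination (2 - u) * huu
    rw [hrw, map_add, map_sub, lowcoeff (hXu2.mul_right u⁻¹) (by omega), add_zero,
      map_sub]
    simp [coeff_one, hv0', hcv0u]
  -- Q coefficients
  obtain ⟨W, hW⟩ : (X : K⟦X⟧) ∣ Q := PowerSeries.X_dvd_iff.mpr hQ0
  have hW0 : constantCoeff W = 1 := by
    have := hQ1
    rw [hW, show (1 : ℕ) = 0 + 1 from rfl, coeff_succ_X_mul, coeff_zero_eq_constantCoeff] at this
    exact this
  have hQlow : (X : K⟦X⟧) ^ v0 ∣ Q ^ v0 := by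
    rw [hW, mul_pow]
    exact dvd_mul_right _ _
  have hQv0 : coeff v0 (Q ^ v0) = 1 := by
    rw [hW, mul_pow]
    have h1 := coeff_X_pow_mul (W ^ v0) v0 0
    rw [zero_add] at h1
    rw [h1, coeff_zero_eq_constantCoeff, map_pow, hW0, one_pow]
  -- coefficients of g
  have hdf : ∀ j : ℕ, j < v0 - 1 → coeff j (PowerSeries.derivative K f) = 0 := by
    intro j hj
    rw [coeff_derivative, hfm (j + 1) (by omega) (by omega), zero_mul]
  have hdfv : coeff (v0 - 1) (PowerSeries.derivative K f) = (v0 : K) := by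
    rw [coeff_derivative, Nat.sub_add_cancel hv0, hfv, one_mul]
    rw [Nat.cast_sub hv0]; push_cast; ring
  have hrhslow : (X : K⟦X⟧) ^ v0 ∣ f * (f ^ v0 - 1) := (hu1.mul_left f)
  have hrhsv0 : coeff v0 (f * (f ^ v0 - 1)) = (v0 : K) := by
    have hrw : f * (u - 1) = (u - 1) + E * (u - 1) := by rw [hE]; ring
    rw [← hu, hrw, map_add,
      lowcoeff (show (X:K⟦X⟧)^(v0+1) ∣ E * (u-1) by
        rw [pow_succ]; exact mul_dvd_mul hXE hXdvdu1) (by omega), add_zero, map_sub]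
    simp [coeff_one, hv0', hcv0u]
  have hg0 : coeff 0 g = 0 := by
    have hc0 := congrArg (coeff (v0 - 1)) hg
    rw [coeff_mul, Finset.sum_eq_single (0, v0 - 1),
      lowcoeff hrhslow (by omega), hdfv] at hc0
    · exact (mul_eq_zero.mp hc0).resolve_right hv0K
    · rintro ⟨i, j⟩ hmem hne
      rw [Finset.HasAntidiagonal.mem_antidiagonal] at hmem
      have : j < v0 - 1 := by
        rcases Nat.eq_zero_or_pos i with h0 | h0
        · exfalso
          have hj1 : j = v0 - 1 := by omega
          exact hne (by rw [h0, hj1])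
        · omega
      rw [hdf j this, mul_zero]
    · intro habs
      exact absurd (Finset.HasAntidiagonal.mem_antidiagonal.mpr (by omega)) habs
  have hg1 : coeff 1 g = 1 := by
    have hc0 := congrArg (coeff v0) hg
    rw [coeff_mul, Finset.sum_eq_single (1, v0 - 1), hrhsv0, hdfv] at hc0
    · have h4 : (coeff 1 g - 1) * (v0 : K) = 0 := by linear_combination hc0
      have := (mul_eq_zero.mp h4).resolve_right hv0K
      linear_combination this
    · rintro ⟨i, j⟩ hmem hne
      rw [Finset.HasAntidiagonal.mem_antidiagonal] at hmem
      rcases Nat.eq_zero_or_pos i with h0 | h0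
      · subst h0; rw [hg0, zero_mul]
      · have hi2 : 2 ≤ i := by
          rcases Nat.lt_or_ge i 2 with h1 | h1
          · exfalso
            have hi1 : i = 1 := by omega
            have hj1 : j = v0 - 1 := by omega
            exact hne (by rw [hi1, hj1])
          · exact h1
        rw [hdf j (by omega), mul_zero]
    · intro habs
      exact absurd (Finset.HasAntidiagonal.mem_antidiagonal.mpr (by omega)) habs
  -- the ODE for S := v0 * Q^v0
  have hQp : Q ^ (v0 - 1) * Q = Q ^ v0 := by
    conv_rhs => rw [show v0 = (v0 - 1) + 1 by omega]
    rw [pow_succ]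
  have hdQpow : PowerSeries.derivative K (Q ^ v0)
      = (v0 : K⟦X⟧) * (Q ^ (v0 - 1) * PowerSeries.derivative K Q) := by
    rw [Derivation.leibniz_pow, smul_eq_mul, nsmul_eq_mul]
  have hdS : PowerSeries.derivative K ((v0 : K⟦X⟧) * Q ^ v0)
      = (v0 : K⟦X⟧) * PowerSeries.derivative K (Q ^ v0) := by
    rw [← nsmul_eq_mul, ← nsmul_eq_mul, map_nsmul]
  have hS : g * PowerSeries.derivative K ((v0 : K⟦X⟧) * Q ^ v0)
      = (v0 : K⟦X⟧) * ((v0 : K⟦X⟧) * Q ^ v0) := by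
    rw [hdS, hdQpow]
    linear_combination ((v0 : K⟦X⟧) ^ 2 * Q ^ (v0 - 1)) * hQeq + ((v0 : K⟦X⟧) ^ 2) * hQp
  -- the ODE for T := 1 - u⁻¹
  have hfp : f ^ (v0 - 1) * f = u := by
    rw [hu]
    conv_rhs => rw [show v0 = (v0 - 1) + 1 by omega]
    rw [pow_succ]
  have hdu : PowerSeries.derivative K u
      = (v0 : K⟦X⟧) * (f ^ (v0 - 1) * PowerSeries.derivative K f) := by
    rw [hu, Derivation.leibniz_pow, smul_eq_mul, nsmul_eq_mul]
  have hdT : PowerSeries.derivative K (1 - u⁻¹)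
      = u⁻¹ ^ 2 * PowerSeries.derivative K u := by
    rw [map_sub, PowerSeries.derivative_inv', Derivation.map_one_eq_zero]
    ring
  have hgdf : g * PowerSeries.derivative K f = f * (u - 1) := by rw [hg, hu]
  have hT : g * PowerSeries.derivative K (1 - u⁻¹) = (v0 : K⟦X⟧) * (1 - u⁻¹) := by
    rw [hdT, hdu]
    linear_combination ((v0 : K⟦X⟧) * u⁻¹ ^ 2 * f ^ (v0 - 1)) * hgdf
      + ((v0 : K⟦X⟧) * u⁻¹ ^ 2 * (u - 1)) * hfp
      + ((v0 : K⟦X⟧) * (u⁻¹ * u - u⁻¹ + 1)) * huu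
  -- conclude via uniqueness
  set D : K⟦X⟧ := (v0 : K⟦X⟧) * Q ^ v0 - (1 - u⁻¹) with hD
  have hDode : g * PowerSeries.derivative K D = (v0 : K⟦X⟧) * D := by
    rw [hD, map_sub]
    linear_combination hS - hT
  have hDlow : ∀ k, k ≤ v0 → coeff k D = 0 := by
    intro k hk
    rw [hD, map_sub, hCmul, map_sub]
    rcases Nat.eq_zero_or_pos k with h0 | h0
    · subst h0
      rw [lowcoeff hQlow (by omega), hinv0]
      simp
    · rcases Nat.lt_or_ge k v0 with h1 | h1
      · have hkinv : coeff k u⁻¹ = 0 := by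
          have := lowcoeff hinvlow h1
          rw [map_sub] at this
          simpa [coeff_one, Nat.pos_iff_ne_zero.mp h0] using this
        rw [lowcoeff hQlow h1, hkinv]
        simp [coeff_one, Nat.pos_iff_ne_zero.mp h0]
      · have hkv : k = v0 := by omega
        subst hkv
        rw [hQv0, hinvv0]
        simp [coeff_one, hv0']
  have := ode_unique v0 g D hg0 hg1 hDode hDlow
  rw [hD] at this
  linear_combination this
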